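/- Let p be a prime and let d ≥ 2 satisfy gcd(d, p−1) = 1, so that π(x) = x^d is a permutation of ℤ/pℤ. Then 0 is a fixed point of π, and for every x ∈ (ℤ/pℤ)* whose multiplicative order is k, the least integer m ≥ 1 with x^{d^m} = x equals the multiplicative order of d modulo k. Consequently, for each divisor k of p−1, the φ(k) elements of (ℤ/pℤ)* of multiplicative order k are partitioned by π into φ(k)/ord_k(d) cycles, each of length ord_k(d), where φ denotes the Euler totient function and ord_k(d) denotes the multiplicative order of d modulo k. -/

import Mathlib

private lemma aux_sUnion_ncard {α : Type*} [Finite α] (t : ℕ) :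
    ∀ (F : Set (Set α)), F.Finite → F.Pairwise Disjoint →
      (∀ s ∈ F, Set.ncard s = t) → (⋃₀ F).ncard = F.ncard * t := by
  intro F hF
  refine Set.Finite.induction_on (motive := fun S _ => S.Pairwise Disjoint →
    (∀ s ∈ S, Set.ncard s = t) → (⋃₀ S).ncard = S.ncard * t) F hF (by simp) ?_
  intro a s ha hs ih hdisj hcard
  have hdisj' : s.Pairwise Disjoint := hdisj.mono (Set.subset_insert a s)
  have hdj : Disjoint a (⋃₀ s) := by
    rw [Set.disjoint_sUnion_right]
    intro b hb
    exact hdisj (Set.mem_insert a s) (Set.mem_insert_of_mem _ hb)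
      (fun h => ha (h ▸ hb))
  have h1 : Set.ncard a = t := hcard a (Set.mem_insert a s)
  have h2 : (⋃₀ s).ncard = s.ncard * t :=
    ih hdisj' (fun u hu => hcard u (Set.mem_insert_of_mem _ hu))
  rw [Set.sUnion_insert, Set.ncard_union_eq hdj (Set.toFinite _) (Set.toFinite _),
    h1, h2, Set.ncard_insert_of_notMem ha (Set.toFinite s), add_mul, one_mul,
    add_comm]

/-- Cycle structure of the power map `π(x) = x^d` on `ℤ/pℤ` when `gcd(d, p-1) = 1`:
`0` is fixed; an element of multiplicative order `k` lies on a cycle of length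
`ord_k(d)` (the multiplicative order of `d` modulo `k`); and for each divisor `k` of
`p-1`, the `φ(k)` elements of order `k` are partitioned into `φ(k)/ord_k(d)` cycles,
each of length `ord_k(d)`. -/
theorem power_map_cycle_structure (p : ℕ) (hp : p.Prime) (d : ℕ) (hd : 2 ≤ d)
    (hgcd : Nat.gcd d (p - 1) = 1) :
    ((0 : ZMod p) ^ d = 0) ∧
    (∀ (x : (ZMod p)ˣ) (k : ℕ), orderOf x = k →
      IsLeast {m : ℕ | 1 ≤ m ∧ x ^ d ^ m = x} (orderOf (d : ZMod k))) ∧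
    (∀ k : ℕ, k ∣ p - 1 →
      Set.ncard {x : (ZMod p)ˣ | orderOf x = k} = Nat.totient k ∧
      ∃ C : Set (Set (ZMod p)ˣ),
        (∀ s ∈ C, ∃ x : (ZMod p)ˣ, orderOf x = k ∧
            s = Set.range fun m : ℕ => x ^ d ^ m) ∧
        (∀ s ∈ C, Set.ncard s = orderOf (d : ZMod k)) ∧
        (⋃₀ C = {x : (ZMod p)ˣ | orderOf x = k}) ∧
        (C.Pairwise Disjoint) ∧
        Set.ncard C = Nat.totient k / orderOf (d : ZMod k)) := by
  haveI : Fact p.Prime := ⟨hp⟩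
  haveI : NeZero p := ⟨hp.pos.ne'⟩
  have hcardU : Fintype.card (ZMod p)ˣ = p - 1 := by
    rw [ZMod.card_units_eq_totient, Nat.totient_prime hp]
  have hp1 : 1 ≤ p - 1 := by have := hp.two_le; omega
  -- coprimality transported to divisors of p - 1
  have hco : ∀ k : ℕ, k ∣ p - 1 → Nat.Coprime d k := fun k hk =>
    Nat.Coprime.coprime_dvd_right hk hgcd
  -- the key equivalence
  have key : ∀ (x : (ZMod p)ˣ) (m : ℕ),
      (x ^ d ^ m = x ↔ orderOf ((d : ZMod (orderOf x))) ∣ m) := by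
    intro x m
    set k := orderOf x with hk
    have hk0 : k ≠ 0 := (orderOf_pos x).ne'
    haveI : NeZero k := ⟨hk0⟩
    have h1 : 1 ≤ d ^ m := Nat.one_le_pow _ _ (by omega)
    have step1 : x ^ d ^ m = x ↔ x ^ (d ^ m - 1) = 1 := by
      conv_lhs => rw [show d ^ m = (d ^ m - 1) + 1 by omega, pow_succ, mul_eq_right]
    rw [step1, ← orderOf_dvd_iff_pow_eq_one, ← hk,
      ← ZMod.natCast_eq_zero_iff (d ^ m - 1) k,
      Nat.cast_sub h1, Nat.cast_pow, Nat.cast_one, sub_eq_zero,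
      ← orderOf_dvd_iff_pow_eq_one]
  -- positivity of the order of d mod k
  have hordpos : ∀ k : ℕ, k ≠ 0 → k ∣ p - 1 → 0 < orderOf ((d : ZMod k)) := by
    intro k hk0 hk
    haveI : NeZero k := ⟨hk0⟩
    have hu : ((ZMod.unitOfCoprime d (hco k hk) : (ZMod k)ˣ) : ZMod k) = d :=
      ZMod.coe_unitOfCoprime d (hco k hk)
    rw [← hu, orderOf_units]
    exact orderOf_pos _
  have hkdvd : ∀ x : (ZMod p)ˣ, orderOf x ∣ p - 1 := fun x =>
    hcardU ▸ orderOf_dvd_card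
  refine ⟨zero_pow (by omega), ?_, ?_⟩
  · -- part 2
    rintro x k rfl
    set t := orderOf ((d : ZMod (orderOf x))) with htdef
    have ht : 0 < t := hordpos _ (orderOf_pos x).ne' (hkdvd x)
    refine ⟨⟨ht, (key x t).mpr dvd_rfl⟩, ?_⟩
    rintro m ⟨hm1, hm2⟩
    exact Nat.le_of_dvd hm1 ((key x m).mp hm2)
  · -- part 3
    intro k hk
    have hk0 : k ≠ 0 := by rintro rfl; omega
    haveI : NeZero k := ⟨hk0⟩
    set t := orderOf ((d : ZMod k)) with htdef
    have ht : 0 < t := hordpos k hk0 hk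
    -- counting elements of order k
    have hcount : Set.ncard {x : (ZMod p)ˣ | orderOf x = k} = Nat.totient k := by
      classical
      rw [Set.ncard_eq_toFinset_card', Set.toFinset_setOf]
      have := IsCyclic.card_orderOf_eq_totient (α := (ZMod p)ˣ) (d := k)
        (hcardU ▸ hk)
      convert this using 2
    -- key specialized
    have key' : ∀ x : (ZMod p)ˣ, orderOf x = k → ∀ m, (x ^ d ^ m = x ↔ t ∣ m) := by
      intro x hx m
      have := key x m
      rwa [hx] at this
    -- periodicity
    have period : ∀ x : (ZMod p)ˣ, orderOf x = k → ∀ c a : ℕ,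
        x ^ d ^ (c + a * t) = x ^ d ^ c := by
      intro x hx c a
      induction a with
      | zero => simp
      | succ a ih =>
        have hfix : x ^ d ^ t = x := (key' x hx t).mpr dvd_rfl
        calc x ^ d ^ (c + (a + 1) * t) = x ^ d ^ ((c + a * t) + t) := by ring_nf
          _ = (x ^ d ^ t) ^ d ^ (c + a * t) := by
              rw [← pow_mul, ← pow_add, add_comm]
          _ = x ^ d ^ (c + a * t) := by rw [hfix]
          _ = x ^ d ^ c := ih
    -- orders along orbits
    have horder : ∀ x : (ZMod p)ˣ, orderOf x = k → ∀ m, orderOf (x ^ d ^ m) = k := by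
      intro x hx m
      have : (orderOf x).Coprime (d ^ m) := by
        rw [hx]; exact ((hco k hk).symm.pow_right m)
      rw [Nat.Coprime.orderOf_pow this, hx]
    -- orbit of a point in an orbit is the same orbit
    have horbit : ∀ x y : (ZMod p)ˣ, orderOf x = k →
        y ∈ Set.range (fun m : ℕ => x ^ d ^ m) →
        Set.range (fun m : ℕ => y ^ d ^ m) = Set.range (fun m : ℕ => x ^ d ^ m) := by
      intro x y hx hy
      obtain ⟨a, rfl⟩ := hy
      ext z
      simp only [Set.mem_range]
      constructor
      · rintro ⟨b, rfl⟩
        exact ⟨a + b, by rw [← pow_mul, ← pow_add]⟩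
      · rintro ⟨c, rfl⟩
        refine ⟨c + a * (t - 1), ?_⟩
        have hae : a + (c + a * (t - 1)) = c + a * t := by
          have h1 : a * (t - 1) = a * t - a := by
            rw [Nat.mul_sub, mul_one]
          have h2 : a ≤ a * t := Nat.le_mul_of_pos_right a ht
          omega
        rw [← pow_mul, ← pow_add, hae, period x hx c a]
    -- injectivity on a period
    have hinj : ∀ x : (ZMod p)ˣ, orderOf x = k → ∀ a b, a < t → b < t →
        x ^ d ^ a = x ^ d ^ b → a = b := by
      have main : ∀ x : (ZMod p)ˣ, orderOf x = k → ∀ a b, a ≤ b → a < t → b < t →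
          x ^ d ^ a = x ^ d ^ b → a = b := by
        intro x hx a b hab ha hb h
        have h2 : x ^ d ^ (a + (t - b)) = x := by
          have := congrArg (· ^ d ^ (t - b)) h
          simp only [← pow_mul, ← pow_add] at this
          rw [this, show b + (t - b) = t by omega]
          exact (key' x hx t).mpr dvd_rfl
        have h3 : t ∣ a + (t - b) := (key' x hx _).mp h2
        have h4 : t ≤ a + (t - b) := Nat.le_of_dvd (by omega) h3
        omega
      intro x hx a b ha hb h
      rcases le_total a b with hab | hab
      · exact main x hx a b hab ha hb h
      · exact (main x hx b a hab hb ha h.symm).symm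
    -- orbit cardinality
    have hcardorb : ∀ x : (ZMod p)ˣ, orderOf x = k →
        (Set.range fun m : ℕ => x ^ d ^ m).ncard = t := by
      intro x hx
      classical
      have hset : (Set.range fun m : ℕ => x ^ d ^ m) =
          ↑((Finset.range t).image fun m : ℕ => x ^ d ^ m) := by
        ext z
        simp only [Set.mem_range, Finset.coe_image, Set.mem_image, Finset.mem_coe,
          Finset.mem_range]
        constructor
        · rintro ⟨m, rfl⟩
          refine ⟨m % t, Nat.mod_lt m ht, ?_⟩
          conv_rhs => rw [show m = m % t + m / t * t from (Nat.mod_add_div' m t).symm]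
          exact (period x hx (m % t) (m / t)).symm
        · rintro ⟨m, _, rfl⟩; exact ⟨m, rfl⟩
      rw [hset, Set.ncard_coe_finset,
        Finset.card_image_of_injOn (fun a haa b hbb hab =>
          hinj x hx a b (Finset.mem_range.mp haa) (Finset.mem_range.mp hbb) hab),
        Finset.card_range]
    refine ⟨hcount, (fun x : (ZMod p)ˣ => Set.range fun m : ℕ => x ^ d ^ m) ''
      {x : (ZMod p)ˣ | orderOf x = k}, ?_, ?_, ?_, ?_, ?_⟩
    · rintro s ⟨x, hx, rfl⟩
      exact ⟨x, hx, rfl⟩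
    · rintro s ⟨x, hx, rfl⟩
      exact hcardorb x hx
    · ext z
      simp only [Set.mem_sUnion, Set.mem_setOf_eq]
      constructor
      · rintro ⟨s, ⟨x, hx, rfl⟩, ⟨m, rfl⟩⟩
        exact horder x hx m
      · intro hz
        exact ⟨_, ⟨z, hz, rfl⟩, ⟨0, by simp⟩⟩
    · rintro s ⟨x, hx, rfl⟩ u ⟨y, hy, rfl⟩ hne
      by_contra hcon
      obtain ⟨z, hz1, hz2⟩ := Set.not_disjoint_iff.mp hcon
      exact hne ((horbit x z hx hz1).symm.trans (horbit y z hy hz2))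
    · set C := (fun x : (ZMod p)ˣ => Set.range fun m : ℕ => x ^ d ^ m) ''
        {x : (ZMod p)ˣ | orderOf x = k} with hC
      have hdisj : C.Pairwise Disjoint := by
        rintro s ⟨x, hx, rfl⟩ u ⟨y, hy, rfl⟩ hne
        by_contra hcon
        obtain ⟨z, hz1, hz2⟩ := Set.not_disjoint_iff.mp hcon
        exact hne ((horbit x z hx hz1).symm.trans (horbit y z hy hz2))
      have hcards : ∀ s ∈ C, Set.ncard s = t := by
        rintro s ⟨x, hx, rfl⟩
        exact hcardorb x hx
      have huni : ⋃₀ C = {x : (ZMod p)ˣ | orderOf x = k} := by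
        ext z
        simp only [Set.mem_sUnion, Set.mem_setOf_eq, hC, Set.mem_image]
        constructor
        · rintro ⟨s, ⟨x, hx, rfl⟩, ⟨m, rfl⟩⟩
          exact horder x hx m
        · intro hz
          exact ⟨_, ⟨z, hz, rfl⟩, ⟨0, by simp⟩⟩
      have := aux_sUnion_ncard t C (Set.toFinite C) hdisj hcards
      rw [huni, hcount] at this
      rw [this, Nat.mul_div_cancel _ ht]
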